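/- Let C be an essentially small abelian category in which every object has only finitely many subobjects. Let H denote the ℚ-vector space of functions from the set of isomorphism classes of objects of C to ℚ. For φ, ψ ∈ H and an object E of C, define (φ ∗ ψ)([E]) = Σ_{B ∈ Subobject(E)} φ([B]) · ψ([E/B]), where the sum runs over all subobjects B of E and E/B denotes the cokernel of the inclusion B → E. Then this formula is well defined on isomorphism classes (independent of the chosen representative E), the product ∗ is associative, and the indicator function of the isomorphism class of the zero object is a two-sided unit; thus (H, ∗) is an associative unital ℚ-algebra. -/

import Mathlib

open CategoryTheory CategoryTheory.Limits ZeroObject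

open scoped Classical

namespace RingelHallProof

open CategoryTheory.Abelian CategoryTheory.Abelian.Pseudoelement

attribute [local instance] CategoryTheory.Abelian.Pseudoelement.objectToSort
  CategoryTheory.Abelian.Pseudoelement.homToFun

set_option linter.unusedSectionVars false
set_option maxHeartbeats 1000000
set_option synthInstance.maxHeartbeats 200000

noncomputable section

variable {C : Type*} [Category C] [Abelian C]

lemma sk_eq {X Y : C} (e : X ≅ Y) : toSkeleton X = toSkeleton Y := Quotient.sound ⟨e⟩

/-- Hall convolution evaluated at an object. -/
def hall (φ ψ : Skeleton C → ℚ) (E : C) : ℚ :=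
  ∑ᶠ B : Subobject E, φ (toSkeleton (B : C)) * ψ (toSkeleton (cokernel B.arrow))

lemma mk_comp_inv {E E' : C} (B : Subobject E) (e : E ≅ E') :
    Subobject.mk ((Subobject.mk (B.arrow ≫ e.hom)).arrow ≫ e.inv) = B := by
  have h : (Subobject.underlyingIso (B.arrow ≫ e.hom)).hom ≫ B.arrow
      = (Subobject.mk (B.arrow ≫ e.hom)).arrow ≫ e.inv := by
    rw [← Subobject.underlyingIso_hom_comp_eq_mk, Category.assoc, Category.assoc,
      e.hom_inv_id, Category.comp_id]
  exact Subobject.mk_eq_of_comm _ (Subobject.underlyingIso (B.arrow ≫ e.hom)) h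

/-- The cokernel of the "transported" subobject is isomorphic to the original cokernel. -/
def cokerMkCompIso {X E E' : C} (f : X ⟶ E) [Mono f] (e : E ≅ E') :
    cokernel (Subobject.mk (f ≫ e.hom)).arrow ≅ cokernel f :=
  cokernelIsoOfEq (Subobject.underlyingIso_hom_comp_eq_mk (f ≫ e.hom)).symm ≪≫
    cokernelEpiComp _ _ ≪≫ cokernelCompIsIso f e.hom

lemma hall_congr (φ ψ : Skeleton C → ℚ) {E E' : C} (e : E ≅ E') :
    hall φ ψ E = hall φ ψ E' := by
  refine finsum_eq_of_bijective (fun B => Subobject.mk (B.arrow ≫ e.hom)) ?_ ?_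
  · refine Function.bijective_iff_has_inverse.mpr
      ⟨fun B' => Subobject.mk (B'.arrow ≫ e.inv), fun B => mk_comp_inv B e, fun B' => ?_⟩
    simpa only [Iso.symm_hom, Iso.symm_inv] using mk_comp_inv B' e.symm
  · intro B
    congr 1
    · exact congrArg φ (sk_eq (Subobject.underlyingIso _)).symm
    · exact congrArg ψ (sk_eq (cokerMkCompIso B.arrow e)).symm

/-- The multiplication on functions on the skeleton. -/
def mul (φ ψ : Skeleton C → ℚ) (x : Skeleton C) : ℚ :=
  hall φ ψ ((fromSkeleton C).obj x)

lemma mul_toSkeleton (φ ψ : Skeleton C → ℚ) (E : C) :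
    mul φ ψ (toSkeleton E) =
      ∑ᶠ B : Subobject E, φ (toSkeleton (B : C)) * ψ (toSkeleton (cokernel B.arrow)) :=
  hall_congr φ ψ (fromSkeletonToSkeletonIso E)

lemma hall_def (φ ψ : Skeleton C → ℚ) (E : C) :
    hall φ ψ E =
      ∑ᶠ B : Subobject E, φ (toSkeleton (B : C)) * ψ (toSkeleton (cokernel B.arrow)) := rfl

lemma mul_eq_hall (φ ψ : Skeleton C → ℚ) (X : C) :
    mul φ ψ (toSkeleton X) = hall φ ψ X :=
  hall_congr φ ψ (fromSkeletonToSkeletonIso X)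

lemma bot_iff {E : C} (B : Subobject E) :
    toSkeleton ((B : C)) = toSkeleton (0 : C) ↔ B = ⊥ := by
  constructor
  · intro h
    obtain ⟨i⟩ := Quotient.exact h
    have h1 : B.arrow = 0 := zero_of_source_iso_zero _ i
    refine le_antisymm (Subobject.le_of_comm (i.hom ≫ (Subobject.botCoeIsoZero).inv) ?_) bot_le
    rw [h1, Subobject.bot_arrow, comp_zero]
  · rintro rfl
    exact sk_eq Subobject.botCoeIsoZero

lemma top_iff {E : C} (B : Subobject E) :
    toSkeleton (cokernel B.arrow) = toSkeleton (0 : C) ↔ B = ⊤ := by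
  constructor
  · intro h
    obtain ⟨i⟩ := Quotient.exact h
    have h1 : cokernel.π B.arrow = 0 := zero_of_target_iso_zero _ i
    haveI := Abelian.epi_of_cokernel_π_eq_zero _ h1
    haveI : IsIso B.arrow := isIso_of_mono_of_epi _
    exact (Subobject.isIso_arrow_iff_eq_top B).mp this
  · rintro rfl
    exact sk_eq (cokernel.ofEpi _)

lemma hall_unit_left (φ : Skeleton C → ℚ) (E : C) :
    hall (fun x => if x = toSkeleton (0 : C) then (1 : ℚ) else 0) φ E = φ (toSkeleton E) := by
  rw [hall, finsum_eq_single _ (⊥ : Subobject E)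
    (fun B hB => by rw [if_neg (fun h => hB ((bot_iff B).mp h)), zero_mul])]
  rw [if_pos ((bot_iff (⊥ : Subobject E)).mpr rfl), one_mul]
  exact congrArg φ (sk_eq (cokernelIsoOfEq (Subobject.bot_arrow) ≪≫ cokernelZeroIsoTarget))

lemma hall_unit_right (φ : Skeleton C → ℚ) (E : C) :
    hall φ (fun x => if x = toSkeleton (0 : C) then (1 : ℚ) else 0) E = φ (toSkeleton E) := by
  rw [hall, finsum_eq_single _ (⊤ : Subobject E)
    (fun B hB => by rw [if_neg (fun h => hB ((top_iff B).mp h)), mul_zero])]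
  rw [if_pos ((top_iff (⊤ : Subobject E)).mpr rfl), mul_one]
  exact congrArg φ (sk_eq (asIso ((⊤ : Subobject E).arrow)))

lemma coker_mk_comp_zero {X Y : C} (f : X ⟶ Y) [Mono f] :
    f ≫ cokernel.π (Subobject.mk f).arrow = 0 :=
  calc f ≫ cokernel.π (Subobject.mk f).arrow
      = ((Subobject.underlyingIso f).inv ≫ (Subobject.mk f).arrow) ≫
          cokernel.π (Subobject.mk f).arrow := by rw [Subobject.underlyingIso_arrow]
    _ = 0 := by rw [Category.assoc, cokernel.condition, comp_zero]

variable {E : C}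

/-- The induced monomorphism `B/A ⟶ E/A`. -/
def dArr (A B : Subobject E) (h : A ≤ B) :
    cokernel (Subobject.ofLE A B h) ⟶ cokernel A.arrow :=
  cokernel.desc _ (B.arrow ≫ cokernel.π A.arrow)
    (by rw [← Category.assoc, Subobject.ofLE_arrow, cokernel.condition])

lemma pi_dArr (A B : Subobject E) (h : A ≤ B) :
    cokernel.π (Subobject.ofLE A B h) ≫ dArr A B h = B.arrow ≫ cokernel.π A.arrow :=
  cokernel.π_desc _ _ _

instance mono_dArr (A B : Subobject E) (h : A ≤ B) : Mono (dArr A B h) := by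
  apply mono_of_zero_of_map_zero
  intro x hx
  obtain ⟨b, rfl⟩ := pseudo_surjective_of_epi (cokernel.π (Subobject.ofLE A B h)) x
  have h1 : (cokernel.π A.arrow) ((B.arrow) b) = 0 := by
    rw [← Pseudoelement.comp_apply, ← pi_dArr A B h, Pseudoelement.comp_apply]
    exact hx
  obtain ⟨t, ht⟩ :=
    pseudo_exact_of_exact (ShortComplex.exact_cokernel A.arrow) _ h1
  have h2 : (B.arrow) ((Subobject.ofLE A B h) t) = (B.arrow) b := by
    rw [← Pseudoelement.comp_apply, Subobject.ofLE_arrow]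
    exact ht
  have h3 := pseudo_injective_of_mono B.arrow h2
  rw [← h3, ← Pseudoelement.comp_apply, cokernel.condition]
  exact zero_apply _ _

lemma recover_zero (A B : Subobject E) (h : A ≤ B) :
    B.arrow ≫ cokernel.π A.arrow ≫ cokernel.π (Subobject.mk (dArr A B h)).arrow = 0 := by
  rw [← Category.assoc, ← pi_dArr A B h, Category.assoc, coker_mk_comp_zero, comp_zero]

lemma recover_eq (A B : Subobject E) (h : A ≤ B) :
    kernelSubobject (cokernel.π A.arrow ≫ cokernel.π (Subobject.mk (dArr A B h)).arrow) = B := by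
  have hex : (ShortComplex.mk B.arrow
      (cokernel.π A.arrow ≫ cokernel.π (Subobject.mk (dArr A B h)).arrow)
      (recover_zero A B h)).Exact := by
    apply exact_of_pseudo_exact
    intro x hx
    have hx' : (cokernel.π (Subobject.mk (dArr A B h)).arrow) ((cokernel.π A.arrow) x) = 0 := by
      rw [← Pseudoelement.comp_apply]
      exact hx
    obtain ⟨t, ht⟩ := pseudo_exact_of_exact
      (ShortComplex.exact_cokernel (Subobject.mk (dArr A B h)).arrow) _ hx'
    have ht' : (dArr A B h) ((Subobject.underlyingIso (dArr A B h)).hom t)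
        = (cokernel.π A.arrow) x := by
      rw [← Pseudoelement.comp_apply, Subobject.underlyingIso_hom_comp_eq_mk]
      exact ht
    obtain ⟨b, hb⟩ := pseudo_surjective_of_epi (cokernel.π (Subobject.ofLE A B h))
      ((Subobject.underlyingIso (dArr A B h)).hom t)
    have hBb : (cokernel.π A.arrow) x = (cokernel.π A.arrow) ((B.arrow) b) := by
      rw [← Pseudoelement.comp_apply, ← pi_dArr A B h, Pseudoelement.comp_apply, hb, ht']
    obtain ⟨z, hz0, hzkey⟩ := sub_of_eq_image (cokernel.π A.arrow) x ((B.arrow) b) hBb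
    obtain ⟨s, hs⟩ := pseudo_exact_of_exact (ShortComplex.exact_cokernel A.arrow) _ hz0
    have hgb : (cokernel.π B.arrow) ((B.arrow) b) = 0 := by
      rw [← Pseudoelement.comp_apply, cokernel.condition]
      exact zero_apply _ _
    have hA0 : A.arrow ≫ cokernel.π B.arrow = 0 := by
      rw [← Subobject.ofLE_arrow h, Category.assoc, cokernel.condition, comp_zero]
    have hgx : (cokernel.π B.arrow) x = 0 := by
      rw [← hzkey _ (cokernel.π B.arrow) hgb, ← hs, ← Pseudoelement.comp_apply, hA0]
      exact zero_apply _ _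
    exact pseudo_exact_of_exact (ShortComplex.exact_cokernel B.arrow) _ hgx
  have h1 := (ShortComplex.exact_iff_image_eq_kernel _).mp hex
  rw [imageSubobject_mono, Subobject.mk_arrow] at h1
  exact h1.symm

lemma le_K (A : Subobject E) (D : Subobject (cokernel A.arrow)) :
    A ≤ kernelSubobject (cokernel.π A.arrow ≫ cokernel.π D.arrow) :=
  Subobject.le_of_comm
    (factorThruKernelSubobject _ A.arrow
      (by rw [← Category.assoc, cokernel.condition, zero_comp]))
    (by simp)

lemma down_up (A : Subobject E) (D : Subobject (cokernel A.arrow)) :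
    Subobject.mk (dArr A (kernelSubobject (cokernel.π A.arrow ≫ cokernel.π D.arrow))
      (le_K A D)) = D := by
  set K := kernelSubobject (cokernel.π A.arrow ≫ cokernel.π D.arrow) with hK
  have hzero : dArr A K (le_K A D) ≫ cokernel.π D.arrow = 0 := by
    rw [← cancel_epi (cokernel.π (Subobject.ofLE A K (le_K A D))), comp_zero,
      ← Category.assoc, pi_dArr, Category.assoc, kernelSubobject_arrow_comp]
  have hex : (ShortComplex.mk (dArr A K (le_K A D)) (cokernel.π D.arrow) hzero).Exact := by
    apply exact_of_pseudo_exact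
    intro q hq
    obtain ⟨x, hx⟩ := pseudo_surjective_of_epi (cokernel.π A.arrow) q
    have hx0 : (cokernel.π A.arrow ≫ cokernel.π D.arrow) x = 0 := by
      rw [Pseudoelement.comp_apply, hx]
      exact hq
    obtain ⟨k', hk'⟩ := pseudo_exact_of_exact
      (ShortComplex.exact_kernel (cokernel.π A.arrow ≫ cokernel.π D.arrow)) _ hx0
    refine ⟨pseudoApply (cokernel.π (Subobject.ofLE A K (le_K A D)))
      (pseudoApply (kernelSubobjectIso (cokernel.π A.arrow ≫ cokernel.π D.arrow)).inv k'), ?_⟩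
    rw [← Pseudoelement.comp_apply, pi_dArr, Pseudoelement.comp_apply]
    have harr : pseudoApply K.arrow
        (pseudoApply (kernelSubobjectIso (cokernel.π A.arrow ≫ cokernel.π D.arrow)).inv k')
        = x := by
      rw [← Pseudoelement.comp_apply, kernelSubobject_arrow']
      exact hk'
    rw [harr, hx]
  have h1 := (ShortComplex.exact_iff_image_eq_kernel _).mp hex
  have h2 := (ShortComplex.exact_iff_image_eq_kernel _).mp
    (ShortComplex.exact_cokernel D.arrow)
  rw [imageSubobject_mono] at h1 h2
  rw [Subobject.mk_arrow] at h2
  exact h1.trans h2.symm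

/-- The correspondence theorem. -/
def corr (A : Subobject E) : {B : Subobject E // A ≤ B} ≃ Subobject (cokernel A.arrow) where
  toFun p := Subobject.mk (dArr A p.1 p.2)
  invFun D := ⟨kernelSubobject (cokernel.π A.arrow ≫ cokernel.π D.arrow), le_K A D⟩
  left_inv p := Subtype.ext (recover_eq A p.1 p.2)
  right_inv D := down_up A D

/-- `E/B ≅ (E/A)/(B/A)`. -/
def cokerCompPi (A B : Subobject E) (h : A ≤ B) :
    cokernel (B.arrow ≫ cokernel.π A.arrow) ≅ cokernel B.arrow where
  hom := cokernel.desc _ (cokernel.desc A.arrow (cokernel.π B.arrow)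
      (by rw [← Subobject.ofLE_arrow h, Category.assoc, cokernel.condition, comp_zero]))
    (by rw [Category.assoc, cokernel.π_desc, cokernel.condition])
  inv := cokernel.desc _ (cokernel.π A.arrow ≫ cokernel.π (B.arrow ≫ cokernel.π A.arrow))
    (by rw [← Category.assoc, cokernel.condition])
  hom_inv_id := by
    rw [← cancel_epi (cokernel.π (B.arrow ≫ cokernel.π A.arrow))]
    rw [← Category.assoc, cokernel.π_desc, Category.comp_id]
    rw [← cancel_epi (cokernel.π A.arrow)]
    rw [← Category.assoc, cokernel.π_desc, cokernel.π_desc]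
  inv_hom_id := by
    rw [← cancel_epi (cokernel.π B.arrow)]
    rw [← Category.assoc, cokernel.π_desc, Category.comp_id, Category.assoc,
      cokernel.π_desc, cokernel.π_desc]

/-- Reindexing bijection between pairs `A₀ ⊆ B ⊆ E` and pairs `A ⊆ E, D ⊆ E/A`. -/
def theta (E : C) : (Σ B : Subobject E, Subobject (B : C)) ≃
    Σ A : Subobject E, Subobject (cokernel A.arrow) :=
  ((Equiv.sigmaCongrRight fun B => (Subobject.subobjectOrderIso B).toEquiv).trans
    ⟨fun p => ⟨p.2.1, p.1, p.2.2⟩, fun p => ⟨p.2.1, p.1, p.2.2⟩,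
      fun _ => rfl, fun _ => rfl⟩).trans
    (Equiv.sigmaCongrRight fun A => corr A)

lemma mk_le (B : Subobject E) (A₀ : Subobject (B : C)) :
    Subobject.mk (A₀.arrow ≫ B.arrow) ≤ B :=
  Subobject.mk_le_of_comm A₀.arrow rfl

lemma theta_apply (B : Subobject E) (A₀ : Subobject (B : C)) :
    theta E ⟨B, A₀⟩ = ⟨Subobject.mk (A₀.arrow ≫ B.arrow),
      Subobject.mk (dArr _ B (mk_le B A₀))⟩ := rfl

lemma ofLE_eq (B : Subobject E) (A₀ : Subobject (B : C)) :
    Subobject.ofLE _ B (mk_le B A₀) =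
      (Subobject.underlyingIso (A₀.arrow ≫ B.arrow)).hom ≫ A₀.arrow := by
  rw [← cancel_mono B.arrow, Subobject.ofLE_arrow, Category.assoc,
    Subobject.underlyingIso_hom_comp_eq_mk]

/-- The middle term of the image pair is isomorphic to `cokernel A₀.arrow`. -/
def isoD (B : Subobject E) (A₀ : Subobject (B : C)) :
    ((Subobject.mk (dArr _ B (mk_le B A₀)) :
        Subobject (cokernel (Subobject.mk (A₀.arrow ≫ B.arrow)).arrow)) : C)
      ≅ cokernel A₀.arrow :=
  Subobject.underlyingIso _ ≪≫ cokernelIsoOfEq (ofLE_eq B A₀) ≪≫ cokernelEpiComp _ _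

/-- The quotient of the image pair is isomorphic to `cokernel B.arrow`. -/
def isoCokerD (B : Subobject E) (A₀ : Subobject (B : C)) :
    cokernel (Subobject.mk (dArr _ B (mk_le B A₀)) :
        Subobject (cokernel (Subobject.mk (A₀.arrow ≫ B.arrow)).arrow)).arrow
      ≅ cokernel B.arrow := by
  set A : Subobject E := Subobject.mk (A₀.arrow ≫ B.arrow) with hA
  set d : cokernel (Subobject.ofLE A B (mk_le B A₀)) ⟶ cokernel A.arrow
    := dArr A B (mk_le B A₀) with hd
  haveI : Epi (Subobject.underlyingIso d).hom := inferInstance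
  haveI : Epi (cokernel.π (Subobject.ofLE A B (mk_le B A₀))) := inferInstance
  exact (cokernelIsoOfEq (Subobject.underlyingIso_hom_comp_eq_mk d)).symm ≪≫
    cokernelEpiComp (Subobject.underlyingIso d).hom d ≪≫
    (cokernelEpiComp (cokernel.π (Subobject.ofLE A B (mk_le B A₀))) d).symm ≪≫
    cokernelIsoOfEq (pi_dArr A B (mk_le B A₀)) ≪≫ cokerCompPi A B (mk_le B A₀)

lemma finsum_sigma' {ι : Type*} {κ : ι → Type*} (hι : Finite ι) (hκ : ∀ i, Finite (κ i))
    (f : (Σ i, κ i) → ℚ) : (∑ᶠ p : Σ i, κ i, f p) = ∑ᶠ i, ∑ᶠ j : κ i, f ⟨i, j⟩ := by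
  letI := Fintype.ofFinite ι
  letI : ∀ i, Fintype (κ i) := fun i => Fintype.ofFinite (κ i)
  simp only [finsum_eq_sum_of_fintype]
  rw [← Finset.univ_sigma_univ, Finset.sum_sigma]

lemma hall_assoc (hfin : ∀ X : C, Finite (Subobject X)) (φ ψ χ : Skeleton C → ℚ) (E : C) :
    (∑ᶠ B : Subobject E, hall φ ψ (B : C) * χ (toSkeleton (cokernel B.arrow)))
      = ∑ᶠ A : Subobject E, φ (toSkeleton (A : C)) * hall ψ χ (cokernel A.arrow) := by
  have hL : ∀ B : Subobject E, hall φ ψ (B : C) * χ (toSkeleton (cokernel B.arrow))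
      = ∑ᶠ A₀ : Subobject (B : C),
          φ (toSkeleton (A₀ : C)) * ψ (toSkeleton (cokernel A₀.arrow))
            * χ (toSkeleton (cokernel B.arrow)) := fun B => by
    rw [hall, finsum_mul _ _]
  have hR : ∀ A : Subobject E, φ (toSkeleton (A : C)) * hall ψ χ (cokernel A.arrow)
      = ∑ᶠ D : Subobject (cokernel A.arrow),
          φ (toSkeleton (A : C)) *
            (ψ (toSkeleton (D : C)) * χ (toSkeleton (cokernel D.arrow))) := fun A => by
    rw [hall, mul_finsum _ _]
  rw [finsum_congr hL, finsum_congr hR]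
  have step1 := finsum_sigma' (hfin E) (fun B => hfin _)
    (fun p : Σ B : Subobject E, Subobject (B : C) =>
      φ (toSkeleton (p.2 : C)) * ψ (toSkeleton (cokernel p.2.arrow))
        * χ (toSkeleton (cokernel p.1.arrow)))
  have step2 := finsum_sigma' (hfin E) (fun A => hfin _)
    (fun p : Σ A : Subobject E, Subobject (cokernel A.arrow) =>
      φ (toSkeleton (p.1 : C)) *
        (ψ (toSkeleton (p.2 : C)) * χ (toSkeleton (cokernel p.2.arrow))))
  rw [← step1, ← step2]
  refine finsum_eq_of_bijective (theta E) (theta E).bijective ?_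
  rintro ⟨B, A₀⟩
  rw [theta_apply B A₀]
  have h1 : toSkeleton ((Subobject.mk (A₀.arrow ≫ B.arrow) : Subobject E) : C)
      = toSkeleton ((A₀ : C)) := sk_eq (Subobject.underlyingIso _)
  have h2 := sk_eq (isoD B A₀)
  have h3 := sk_eq (isoCokerD B A₀)
  dsimp only
  rw [h1, h2, h3]
  ring

lemma mul_assoc_final (hfin : ∀ X : C, Finite (Subobject X)) (φ ψ χ : Skeleton C → ℚ) :
    mul (mul φ ψ) χ = mul φ (mul ψ χ) := by
  funext x
  obtain ⟨Ex, rfl⟩ := Quotient.exists_rep x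
  rw [show (⟦Ex⟧ : Skeleton C) = toSkeleton Ex from rfl]
  rw [mul_eq_hall, mul_eq_hall, hall_def (mul φ ψ) χ Ex, hall_def φ (mul ψ χ) Ex]
  refine (finsum_congr fun B => ?_).trans
    ((hall_assoc hfin φ ψ χ Ex).trans (finsum_congr fun A => ?_))
  · rw [mul_eq_hall]
  · rw [mul_eq_hall]

lemma mul_unit_left (φ : Skeleton C → ℚ) :
    mul (fun x => if x = toSkeleton (0 : C) then (1 : ℚ) else 0) φ = φ := by
  funext x
  obtain ⟨Ex, rfl⟩ := Quotient.exists_rep x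
  exact (mul_eq_hall _ φ Ex).trans (hall_unit_left φ Ex)

lemma mul_unit_right (φ : Skeleton C → ℚ) :
    mul φ (fun x => if x = toSkeleton (0 : C) then (1 : ℚ) else 0) = φ := by
  funext x
  obtain ⟨Ex, rfl⟩ := Quotient.exists_rep x
  exact (mul_eq_hall φ _ Ex).trans (hall_unit_right φ Ex)

end

end RingelHallProof

/-- Let `C` be an essentially small abelian category in which every object
has only finitely many subobjects.  On the `ℚ`-vector space of functions on isomorphism
classes of objects of `C` there is a well-defined convolution product
`(φ ∗ ψ)([E]) = ∑_{B ≤ E} φ([B]) · ψ([E/B])` (independent of the representative `E`),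
which is associative and has the indicator function of the class of the zero object
as a two-sided unit. -/
theorem ringelHall_algebra_exists
    (C : Type*) [Category C] [Abelian C] [EssentiallySmall C]
    (hfin : ∀ X : C, Finite (Subobject X)) :
    ∃ mul : (Skeleton C → ℚ) → (Skeleton C → ℚ) → (Skeleton C → ℚ),
      (∀ (φ ψ : Skeleton C → ℚ) (E : C),
        mul φ ψ (toSkeleton E) =
          ∑ᶠ B : Subobject E,
            φ (toSkeleton (B : C)) * ψ (toSkeleton (cokernel B.arrow))) ∧
      (∀ φ ψ χ : Skeleton C → ℚ, mul (mul φ ψ) χ = mul φ (mul ψ χ)) ∧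
      (∀ φ : Skeleton C → ℚ,
        mul (fun x => if x = toSkeleton (0 : C) then (1 : ℚ) else 0) φ = φ) ∧
      (∀ φ : Skeleton C → ℚ,
        mul φ (fun x => if x = toSkeleton (0 : C) then (1 : ℚ) else 0) = φ) :=
  ⟨RingelHallProof.mul, RingelHallProof.mul_toSkeleton,
    fun φ ψ χ => RingelHallProof.mul_assoc_final hfin φ ψ χ,
    RingelHallProof.mul_unit_left, RingelHallProof.mul_unit_right⟩
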